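/- Let X be a compact Hausdorff space and let A be a unital C(X)-algebra such that every fibre A_x, x ∈ X, is properly infinite. Then there exists a natural number n such that the matrix algebra M_n(A) is properly infinite. -/

import Mathlib

noncomputable section

/-- A projection in a *-ring. -/
def IsProjection {R : Type*} [Mul R] [Star R] (p : R) : Prop :=
  star p = p ∧ p * p = p

/-- Murray–von Neumann equivalence. -/
def MvNEquiv {R : Type*} [Mul R] [Star R] (p q : R) : Prop :=
  ∃ v : R, star v * v = p ∧ v * star v = q

/-- A properly infinite projection: two orthogonal subprojections each equivalent to `p`. -/
def IsProperlyInfinite {R : Type*} [Ring R] [StarRing R] (p : R) : Prop :=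
  ∃ v w : R, star v * v = p ∧ star w * w = p ∧
    p * (v * star v) = v * star v ∧ p * (w * star w) = w * star w ∧
    (v * star v) * (w * star w) = 0

/-- A full element: contained in no proper closed two-sided ideal. -/
def IsFullElem {R : Type*} [Ring R] [TopologicalSpace R] (a : R) : Prop :=
  ∀ I : TwoSidedIdeal R, IsClosed (I : Set R) → a ∈ I → I = ⊤

/-- `[u] = 0` in `K₁`: some stabilization `diag (u,1,…,1)` is connected to `1` in the unitary
group of a matrix algebra. -/
def K1Trivial {R : Type*} [Ring R] [StarRing R] [TopologicalSpace R] (u : R) : Prop :=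
  ∃ n : ℕ, ∃ w : unitary (Matrix (Fin (n + 1)) (Fin (n + 1)) R),
    w.val
      = Matrix.diagonal (fun i => if i = 0 then u else 1) ∧
    Joined (1 : unitary (Matrix (Fin (n + 1)) (Fin (n + 1)) R)) w

/-- `K₁`-injectivity of a unital C*-algebra. -/
def K1Injective (R : Type*) [Ring R] [StarRing R] [TopologicalSpace R] : Prop :=
  ∀ u : unitary R, K1Trivial (u : R) → Joined (1 : unitary R) u

/-- Homotopy of projections: a continuous path of projections from `p` to `q`. -/
def HomotopicProj {R : Type*} [Mul R] [Star R] [TopologicalSpace R] (p q : R) : Prop :=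
  ∃ f : C(unitInterval, R), f 0 = p ∧ f 1 = q ∧ ∀ t, IsProjection (f t)

/-- Stabilized projection `diag (p, 1, …, 1, 0, …, 0)` (with `k+1` ones). -/
def stabProj {R : Type*} [Ring R] (p : R) (k n : ℕ) : Matrix (Fin (n + 1)) (Fin (n + 1)) R :=
  Matrix.diagonal (fun i => if i = 0 then p else if (i : ℕ) ≤ k + 1 then 1 else 0)

/-- `[p] = [q]` in `K₀` of a unital ring, via stabilized Murray–von Neumann equivalence. -/
def K0Eq {R : Type*} [Ring R] [StarRing R] (p q : R) : Prop :=
  ∃ k n : ℕ, MvNEquiv (stabProj p k n) (stabProj q k n)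


/-- The closed two-sided ideal `I_F = C₀(X \ F)·A` of a `C(X)`-algebra determined by a closed
set `F ⊆ X` (here just as a closed subset of `A`). -/
def fibreIdeal {X : Type*} [TopologicalSpace X] {A : Type*} [CStarAlgebra A]
    (Θ : C(X, ℂ) →⋆ₐ[ℂ] A) (F : Set X) : Set A :=
  closure (Submodule.span ℂ
    {x : A | ∃ (f : C(X, ℂ)) (a : A), (∀ y ∈ F, f y = 0) ∧ x = Θ f * a} : Set A)

/-- The quotient `A/J` is (unitally) properly infinite: there are two elements of `A` which are
isometries with orthogonal range projections modulo `J`. -/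
def QuotProperlyInfinite {A : Type*} [CStarAlgebra A] (J : Set A) : Prop :=
  ∃ s t : A, star s * s - 1 ∈ J ∧ star t * t - 1 ∈ J ∧ (s * star s) * (t * star t) ∈ J

namespace Stmt9Aux

/- ======================  pure algebra  ====================== -/
section Alg
variable {A : Type*} [Ring A] [StarRing A]

omit [StarRing A] in
lemma central_swap {F : A} (hF : ∀ b : A, F * b = b * F) (a b : A) :
    a * (F * b) = F * (a * b) := by rw [← mul_assoc, ← hF a, mul_assoc]

omit [StarRing A] in
lemma mv2 {u : A} (hu : ∀ b : A, u * b = b * u) (a z : A) :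
    u * (u * (a * z)) = a * (u * (u * z)) := by
  rw [← central_swap hu a z, ← central_swap hu a (u * z)]

lemma iso_step (F v r m : A)
    (hF : ∀ b : A, F * b = b * F) (hFsa : star F = F)
    (hm : m = 1 + F * (F * (star v * v - 1)))
    (hrsa : star r = r) (hr1 : r * m * r = 1) :
    star (F * v * r) * (F * v * r) = 1 - (1 - F * F) * (r * r) := by
  have hw : F * (F * (star v * v)) = m - 1 + F * F := by rw [hm]; noncomm_ring
  have step1 : star (F * v * r) = r * (star v * F) := by
    simp only [star_mul, hrsa, hFsa, mul_assoc]
  calc star (F * v * r) * (F * v * r)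
      = r * (star v * (F * (F * (v * r)))) := by rw [step1]; simp only [mul_assoc]
    _ = r * (F * (F * (star v * (v * r)))) := by
        rw [central_swap hF (star v), central_swap hF (star v)]
    _ = r * ((m - 1 + F * F) * r) := by
        rw [show star v * (v * r) = (star v * v) * r from (mul_assoc _ _ _).symm]
        rw [show F * (F * (star v * v * r)) = F * (F * (star v * v)) * r by
          simp only [mul_assoc]]
        rw [hw]
    _ = r * m * r - r * r + r * (F * (F * r)) := by noncomm_ring
    _ = 1 - r * r + F * (F * (r * r)) := by
        rw [hr1, central_swap hF r, central_swap hF r]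
    _ = 1 - (1 - F * F) * (r * r) := by noncomm_ring

lemma pow_rel (c S T : A)
    (hc : ∀ b : A, c * b = b * c) (hcsa : star c = c)
    (h1 : c * (star S * S) = c) (h2 : c * (star T * T) = c) (h3 : c * (star S * T) = 0) :
    ∀ a b : ℕ, c * (star S * ((star T)^a * (T^b * S))) = if a = b then c else 0 := by
  have hins : ∀ (P Q D : A), c * D = c → c * (P * (D * Q)) = c * (P * Q) := by
    intro P Q D hD
    calc c * (P * (D * Q)) = P * ((c * D) * Q) := by
          simp only [← mul_assoc, hc P]
      _ = P * (c * Q) := by rw [hD]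
      _ = c * (P * Q) := by rw [← mul_assoc, ← hc P, mul_assoc]
  have hb0 : ∀ b : ℕ, c * (star S * (T^(b+1) * S)) = 0 := by
    intro b
    calc c * (star S * (T^(b+1) * S)) = (c * (star S * T)) * (T^b * S) := by
          rw [pow_succ' T b]; simp only [mul_assoc]
      _ = 0 := by rw [h3, zero_mul]
  have ha0 : ∀ a : ℕ, c * (star S * ((star T)^(a+1) * S)) = 0 := by
    intro a
    have hE : star (star S * (T^(a+1) * S)) = star S * ((star T)^(a+1) * S) := by
      simp only [star_mul, star_star, star_pow]
      simp only [mul_assoc]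
    have h0 : star S * (T^(a+1) * S) * c = 0 := by rw [← hc]; exact hb0 a
    calc c * (star S * ((star T)^(a+1) * S))
        = c * star (star S * (T^(a+1) * S)) := by rw [hE]
      _ = star ((star S * (T^(a+1) * S)) * c) := by
            rw [star_mul (star S * (T^(a+1) * S)) c, hcsa]
      _ = 0 := by rw [h0, star_zero]
  intro a
  induction a with
  | zero =>
    intro b
    match b with
    | 0 => simp [h1]
    | Nat.succ k =>
      simp only [pow_zero, one_mul]
      rw [if_neg (by omega)]
      exact hb0 k
  | succ k IH =>
    intro b
    match b with
    | 0 =>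
      simp only [pow_zero, one_mul]
      rw [if_neg (by omega)]
      exact ha0 k
    | Nat.succ l =>
      have expand : star S * ((star T)^(k+1) * (T^(l+1) * S))
          = (star S * (star T)^k) * ((star T * T) * (T^l * S)) := by
        rw [pow_succ (star T) k, pow_succ' T l]
        simp only [mul_assoc]
      rw [expand, hins _ _ _ h2]
      rw [show (star S * (star T)^k) * (T^l * S) = star S * ((star T)^k * (T^l * S)) by
        simp only [mul_assoc]]
      rw [IH l]
      simp

end Alg

/- ======================  invsqrt  ====================== -/
section Inv
variable {A : Type*} [CStarAlgebra A]

theorem exists_invsqrt (m : A) (hm : IsSelfAdjoint m) (hnorm : ‖m - 1‖ ≤ 1/2) :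
    ∃ r : A, IsSelfAdjoint r ∧ ‖r‖ ≤ 2 ∧ r * m * r = 1 ∧ m * r = r * m := by
  obtain hA | hA := subsingleton_or_nontrivial A
  · exact ⟨0, by simp [IsSelfAdjoint], by norm_num,
      Subsingleton.elim _ _, Subsingleton.elim _ _⟩
  have hspec : spectrum ℝ m ⊆ Set.Icc (1/2 : ℝ) (3/2) := by
    intro θ hθ
    have h1 : θ - 1 ∈ spectrum ℝ (m - algebraMap ℝ A 1) := by
      rw [← spectrum.sub_singleton_eq]
      exact Set.sub_mem_sub hθ rfl
    have h2 : ‖θ - 1‖ ≤ ‖m - 1‖ := by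
      have := spectrum.norm_le_norm_of_mem h1
      simpa [map_one] using this
    have h3 : |θ - 1| ≤ 1/2 := by
      rw [Real.norm_eq_abs] at h2; linarith
    constructor
    · linarith [(abs_le.mp h3).1]
    · linarith [(abs_le.mp h3).2]
  set f : ℝ → ℝ := fun x => (Real.sqrt x)⁻¹ with hf_def
  have hfc : ContinuousOn f (spectrum ℝ m) := by
    apply ContinuousOn.inv₀ (Real.continuous_sqrt.continuousOn)
    intro x hx
    have := (hspec hx).1
    positivity
  have hric : ContinuousOn (fun x : ℝ => x * f x) (spectrum ℝ m) :=
    continuousOn_id.mul hfc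
  have key : ∀ x ∈ spectrum ℝ m, f x * (x * f x) = 1 := by
    intro x hx
    have hx2 : (0:ℝ) < x := lt_of_lt_of_le (by norm_num) (hspec hx).1
    have hs : Real.sqrt x ≠ 0 := by positivity
    rw [hf_def]
    rw [show x = Real.sqrt x * Real.sqrt x from (Real.mul_self_sqrt hx2.le).symm]
    field_simp
    rw [Real.sqrt_sq (Real.sqrt_nonneg x)]
  refine ⟨cfc f m, cfc_predicate f m, ?_, ?_, ?_⟩
  · refine norm_cfc_le (by norm_num) fun x hx => ?_
    have h12 : (1/2 : ℝ) ≤ x := (hspec hx).1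
    have hsq : (1/2 : ℝ) ≤ Real.sqrt x := by
      rw [show (1/2 : ℝ) = Real.sqrt (1/4) by
        rw [show (1/4 : ℝ) = (1/2)^2 by norm_num, Real.sqrt_sq (by norm_num)]]
      exact Real.sqrt_le_sqrt (by linarith)
    have hpos : (0:ℝ) < Real.sqrt x := by linarith
    rw [Real.norm_eq_abs, abs_of_nonneg (by positivity)]
    rw [inv_le_comm₀ hpos (by norm_num)]
    linarith
  all_goals {
    have h1 := cfc_mul (fun x : ℝ => x) f m continuousOn_id hfc
    rw [cfc_id' ℝ m] at h1
    have h2 := cfc_mul f (fun x : ℝ => x) m hfc continuousOn_id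
    rw [cfc_id' ℝ m] at h2
    first
    | (calc cfc f m * m * cfc f m = cfc f m * (m * cfc f m) := by rw [mul_assoc]
        _ = cfc f m * cfc (fun x : ℝ => x * f x) m := by rw [h1]
        _ = cfc (fun x : ℝ => f x * (x * f x)) m := (cfc_mul _ _ m hfc hric).symm
        _ = cfc (fun _ : ℝ => (1:ℝ)) m := cfc_congr key
        _ = 1 := by
            have := cfc_one (R := ℝ) m
            simpa [Pi.one_def] using this)
    | (calc m * cfc f m = cfc (fun x : ℝ => x * f x) m := h1.symm
        _ = cfc (fun x : ℝ => f x * x) m := by simp [mul_comm]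
        _ = cfc f m * m := h2) }

end Inv

section CxCutoff

def cx {X : Type*} [TopologicalSpace X] (f : C(X, ℝ)) : C(X, ℂ) :=
  ⟨fun y => (f y : ℂ), Complex.continuous_ofReal.comp f.continuous⟩

variable {X : Type*} [TopologicalSpace X]

@[simp] lemma cx_apply (f : C(X, ℝ)) (y : X) : cx f y = (f y : ℂ) := rfl

lemma cx_mul (f g : C(X, ℝ)) : cx (f * g) = cx f * cx g := by ext y; simp

lemma cx_one : cx (1 : C(X, ℝ)) = 1 := by ext y; simp

lemma cx_zero : cx (0 : C(X, ℝ)) = 0 := by ext y; simp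

lemma cx_sub (f g : C(X, ℝ)) : cx (f - g) = cx f - cx g := by ext y; simp

lemma star_cx (f : C(X, ℝ)) : star (cx f) = cx f := by
  ext y; simp [Complex.conj_ofReal]

lemma norm_cx_le {f : C(X, ℝ)} [CompactSpace X] {c : ℝ} (hc : 0 ≤ c)
    (h : ∀ y, |f y| ≤ c) : ‖cx f‖ ≤ c := by
  rw [ContinuousMap.norm_le _ hc]; intro y; simpa using h y

variable [CompactSpace X] [T2Space X] {A : Type*} [CStarAlgebra A]

lemma norm_theta_apply_le (Θ : C(X, ℂ) →⋆ₐ[ℂ] A) (g : C(X, ℂ)) : ‖Θ g‖ ≤ ‖g‖ :=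
  NonUnitalStarAlgHom.norm_apply_le Θ g

lemma norm_theta_cx_le_one (Θ : C(X, ℂ) →⋆ₐ[ℂ] A) {h : C(X, ℝ)}
    (h0 : ∀ y, 0 ≤ h y) (h1 : ∀ y, h y ≤ 1) : ‖Θ (cx h)‖ ≤ 1 :=
  (norm_theta_apply_le Θ _).trans
    (norm_cx_le zero_le_one fun y => abs_le.mpr ⟨by linarith [h0 y], h1 y⟩)

theorem cutoff (Θ : C(X, ℂ) →⋆ₐ[ℂ] A) (x : X) (a : A) (ha : a ∈ fibreIdeal Θ {x})
    {ε : ℝ} (hε : 0 < ε) :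
    ∃ (f : C(X, ℝ)) (U : Set X), IsOpen U ∧ x ∈ U ∧ (∀ y, 0 ≤ f y) ∧ (∀ y, f y ≤ 1) ∧
      (∀ y ∈ U, f y = 1) ∧ ‖Θ (cx f) * a‖ < ε := by
  obtain ⟨b, hbmem, hab⟩ := Metric.mem_closure_iff.mp ha (ε/2) (by linarith)
  rw [SetLike.mem_coe] at hbmem
  obtain ⟨n, c, v, hb⟩ := Submodule.mem_span_set'.mp hbmem
  choose h aa hh hv using fun i => (v i).2
  set S : ℝ := ∑ i, ‖c i‖ * ‖aa i‖ with hS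
  have hS0 : 0 ≤ S := Finset.sum_nonneg fun i _ => by positivity
  set δ : ℝ := (ε/2) / (S + 1) with hδ
  have hδ0 : 0 < δ := by positivity
  set V : Set X := {y | ∀ i, ‖h i y‖ < δ} with hV
  have hVopen : IsOpen V := by
    have : V = ⋂ i, {y | ‖h i y‖ < δ} := by
      ext y; simp [hV, Set.mem_iInter]
    rw [this]
    exact isOpen_iInter_of_finite fun i =>
      isOpen_lt (continuous_norm.comp (h i).continuous) continuous_const
  have hxV : x ∈ V := by
    intro i
    rw [hh i x (Set.mem_singleton x)]
    simpa using hδ0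
  obtain ⟨u, huopen, hxu, hclou⟩ :=
    normal_exists_closure_subset (isClosed_singleton (x := x)) hVopen
      (Set.singleton_subset_iff.mpr hxV)
  rw [Set.singleton_subset_iff] at hxu
  obtain ⟨f, hf0, hf1, hficc⟩ :=
    exists_continuous_zero_one_of_isClosed (isClosed_compl_iff.mpr hVopen)
      isClosed_closure (by
        rw [Set.disjoint_compl_left_iff_subset]; exact hclou)
  refine ⟨f, u, huopen, hxu, fun y => (hficc y).1, fun y => (hficc y).2, ?_, ?_⟩
  · exact fun y hy => hf1 (subset_closure hy)
  · have hnf : ‖Θ (cx f)‖ ≤ 1 := le_trans (norm_theta_apply_le Θ _)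
      (norm_cx_le zero_le_one (fun y => abs_le.mpr ⟨by linarith [(hficc y).1], (hficc y).2⟩))
    have key : ∀ i, ‖Θ (cx f) * ((v i : A))‖ ≤ δ * ‖aa i‖ := by
      intro i
      rw [hv i, ← mul_assoc, ← map_mul]
      refine le_trans (norm_mul_le _ _) ?_
      gcongr
      refine le_trans (norm_theta_apply_le Θ _) ?_
      rw [ContinuousMap.norm_le _ hδ0.le]
      intro y
      by_cases hyV : y ∈ V
      · calc ‖(cx f * h i) y‖ = ‖(f y : ℂ)‖ * ‖h i y‖ := by simp
          _ ≤ 1 * δ := by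
              apply mul_le_mul _ (hyV i).le (norm_nonneg _) zero_le_one
              simpa using abs_le.mpr ⟨by linarith [(hficc y).1], (hficc y).2⟩
          _ = δ := one_mul δ
      · have : f y = 0 := hf0 hyV
        simp [this, hδ0.le]
    calc ‖Θ (cx f) * a‖ ≤ ‖Θ (cx f) * (a - b)‖ + ‖Θ (cx f) * b‖ := by
          rw [show Θ (cx f) * a = Θ (cx f) * (a - b) + Θ (cx f) * b by
            rw [← mul_add, sub_add_cancel]]
          exact norm_add_le _ _
      _ < ε/2 + ε/2 := by
          apply add_lt_add_of_le_of_lt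
          · calc ‖Θ (cx f) * (a - b)‖ ≤ ‖Θ (cx f)‖ * ‖a - b‖ := norm_mul_le _ _
              _ ≤ 1 * (ε/2) := by
                  apply mul_le_mul hnf _ (norm_nonneg _) zero_le_one
                  rw [← dist_eq_norm]; exact hab.le
              _ = ε/2 := one_mul _
          · calc ‖Θ (cx f) * b‖ = ‖∑ i, c i • (Θ (cx f) * (v i : A))‖ := by
                  rw [← hb, Finset.mul_sum]
                  congr 1
                  exact Finset.sum_congr rfl fun i _ => mul_smul_comm _ _ _
              _ ≤ ∑ i, ‖c i • (Θ (cx f) * (v i : A))‖ := norm_sum_le _ _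
              _ ≤ ∑ i, ‖c i‖ * (δ * ‖aa i‖) := by
                  apply Finset.sum_le_sum
                  intro i _
                  rw [norm_smul]
                  exact mul_le_mul_of_nonneg_left (key i) (norm_nonneg _)
              _ = δ * S := by
                  rw [hS, Finset.mul_sum]
                  exact Finset.sum_congr rfl fun i _ => by ring
              _ < ε/2 := by
                  rw [hδ, div_mul_eq_mul_div, div_lt_iff₀ (by positivity)]
                  nlinarith
      _ = ε := by ring

end CxCutoff

section Local

variable {X : Type*} [TopologicalSpace X] [CompactSpace X] [T2Space X]
variable {A : Type*} [CStarAlgebra A]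

set_option maxHeartbeats 2000000 in
theorem local_data (Θ : C(X, ℂ) →⋆ₐ[ℂ] A)
    (hcent : ∀ (u : C(X, ℂ)) (a : A), Θ u * a = a * Θ u)
    (x : X) (hfib : QuotProperlyInfinite (fibreIdeal Θ {x})) :
    ∃ U : Set X, IsOpen U ∧ x ∈ U ∧ ∃ S T : A,
      ∀ γ : C(X, ℝ), (∀ y, y ∉ U → γ y = 0) →
        Θ (cx γ) * (star S * S) = Θ (cx γ) ∧
        Θ (cx γ) * (star T * T) = Θ (cx γ) ∧
        Θ (cx γ) * (star S * T) = 0 := by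
  obtain ⟨s₀, t₀, hd1m, hd2m, hd3m⟩ := hfib
  set d1 := star s₀ * s₀ - 1 with hd1def
  set d2 := star t₀ * t₀ - 1 with hd2def
  set d3 := (s₀ * star s₀) * (t₀ * star t₀) with hd3def
  set M := ‖s₀‖ + ‖t₀‖ + 1 with hMdef
  have hM1 : 1 ≤ M := by
    have := norm_nonneg s₀; have := norm_nonneg t₀; rw [hMdef]; linarith
  have hM0 : (0:ℝ) < M := by linarith
  have hs0M : ‖s₀‖ ≤ M := by
    have := norm_nonneg t₀; rw [hMdef]; linarith
  have ht0M : ‖t₀‖ ≤ M := by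
    have := norm_nonneg s₀; rw [hMdef]; linarith
  set ε := 1 / (1000 * M^8) with hεdef
  have hM8 : (1:ℝ) ≤ M^8 := one_le_pow₀ hM1
  have hε : 0 < ε := by rw [hεdef]; positivity
  have hεle : 288 * M^8 * ε ≤ 1/2 := by
    rw [hεdef]
    rw [show 288 * M^8 * (1 / (1000 * M^8)) = 288/1000 by field_simp]
    norm_num
  have hε12 : ε ≤ 1/2 := by
    rw [hεdef]
    rw [div_le_div_iff₀ (by positivity) (by norm_num)]
    nlinarith
  -- a helper for norm products
  have hmul : ∀ (a b : A) (ca cb : ℝ), ‖a‖ ≤ ca → ‖b‖ ≤ cb → 0 ≤ ca → ‖a * b‖ ≤ ca * cb := by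
    intro a b ca cb ha hb hca
    exact (norm_mul_le a b).trans (mul_le_mul ha hb (norm_nonneg _) hca)
  -- cutoffs
  obtain ⟨f₁, U₁, hU₁o, hxU₁, hf₁0, hf₁1, hf₁pl, hc₁⟩ := cutoff Θ x d1 hd1m hε
  obtain ⟨f₂, U₂, hU₂o, hxU₂, hf₂0, hf₂1, hf₂pl, hc₂⟩ := cutoff Θ x d2 hd2m hε
  obtain ⟨f₃, U₃, hU₃o, hxU₃, hf₃0, hf₃1, hf₃pl, hc₃⟩ := cutoff Θ x d3 hd3m hε
  set f := f₁ * (f₂ * f₃) with hfdef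
  have hf0 : ∀ y, 0 ≤ f y := by
    intro y
    simp only [hfdef, ContinuousMap.mul_apply]
    have := hf₁0 y; have := hf₂0 y; have := hf₃0 y
    positivity
  have hf1 : ∀ y, f y ≤ 1 := by
    intro y
    simp only [hfdef, ContinuousMap.mul_apply]
    have a0 := hf₁0 y; have b0 := hf₂0 y; have c0 := hf₃0 y
    have a1 := hf₁1 y; have b1 := hf₂1 y; have c1 := hf₃1 y
    exact mul_le_one₀ a1 (mul_nonneg b0 c0) (mul_le_one₀ b1 c0 c1)
  set Uf := U₁ ∩ (U₂ ∩ U₃) with hUfdef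
  have hUfo : IsOpen Uf := hU₁o.inter (hU₂o.inter hU₃o)
  have hxUf : x ∈ Uf := ⟨hxU₁, hxU₂, hxU₃⟩
  have hfpl : ∀ y ∈ Uf, f y = 1 := by
    intro y hy
    simp only [hfdef, ContinuousMap.mul_apply]
    rw [hf₁pl y hy.1, hf₂pl y hy.2.1, hf₃pl y hy.2.2]
    norm_num
  set F := Θ (cx f) with hFdef
  have hFc : ∀ b : A, F * b = b * F := fun b => hcent _ b
  have hFsa : star F = F := by rw [hFdef, ← map_star, star_cx]
  have hFn : ‖F‖ ≤ 1 := norm_theta_cx_le_one Θ hf0 hf1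
  have hC₁ : ‖F * d1‖ ≤ ε := by
    have hff : f = (f₂ * f₃) * f₁ := by rw [hfdef]; ring
    calc ‖F * d1‖ = ‖Θ (cx (f₂*f₃)) * (Θ (cx f₁) * d1)‖ := by
          rw [hFdef, hff, cx_mul, map_mul, mul_assoc]
      _ ≤ 1 * ε := by
          refine hmul _ _ _ _ ?_ hc₁.le zero_le_one
          refine norm_theta_cx_le_one Θ (fun y => ?_) (fun y => ?_)
          · simp only [ContinuousMap.mul_apply]
            have := hf₂0 y; have := hf₃0 y; positivity
          · simp only [ContinuousMap.mul_apply]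
            have a0 := hf₂0 y; have b0 := hf₃0 y
            have a1 := hf₂1 y; have b1 := hf₃1 y
            exact mul_le_one₀ a1 b0 b1
      _ = ε := one_mul ε
  have hC₂ : ‖F * d2‖ ≤ ε := by
    have hff : f = (f₁ * f₃) * f₂ := by rw [hfdef]; ring
    calc ‖F * d2‖ = ‖Θ (cx (f₁*f₃)) * (Θ (cx f₂) * d2)‖ := by
          rw [hFdef, hff, cx_mul, map_mul, mul_assoc]
      _ ≤ 1 * ε := by
          refine hmul _ _ _ _ ?_ hc₂.le zero_le_one
          refine norm_theta_cx_le_one Θ (fun y => ?_) (fun y => ?_)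
          · simp only [ContinuousMap.mul_apply]
            have := hf₁0 y; have := hf₃0 y; positivity
          · simp only [ContinuousMap.mul_apply]
            have a0 := hf₁0 y; have b0 := hf₃0 y
            have a1 := hf₁1 y; have b1 := hf₃1 y
            exact mul_le_one₀ a1 b0 b1
      _ = ε := one_mul ε
  have hC₃ : ‖F * d3‖ ≤ ε := by
    have hff : f = (f₁ * f₂) * f₃ := by rw [hfdef]; ring
    calc ‖F * d3‖ = ‖Θ (cx (f₁*f₂)) * (Θ (cx f₃) * d3)‖ := by
          rw [hFdef, hff, cx_mul, map_mul, mul_assoc]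
      _ ≤ 1 * ε := by
          refine hmul _ _ _ _ ?_ hc₃.le zero_le_one
          refine norm_theta_cx_le_one Θ (fun y => ?_) (fun y => ?_)
          · simp only [ContinuousMap.mul_apply]
            have := hf₁0 y; have := hf₂0 y; positivity
          · simp only [ContinuousMap.mul_apply]
            have a0 := hf₁0 y; have b0 := hf₂0 y
            have a1 := hf₁1 y; have b1 := hf₂1 y
            exact mul_le_one₀ a1 b0 b1
      _ = ε := one_mul ε
  -- first inverse square roots
  have hd1sa : star d1 = d1 := by simp [hd1def, star_sub]
  have hd2sa : star d2 = d2 := by simp [hd2def, star_sub]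
  set m₁ := 1 + F * (F * d1) with hm₁def
  have hm₁sa : IsSelfAdjoint m₁ := by
    have h9 : star (F * (F * d1)) = F * (F * d1) := by
      simp only [star_mul, hFsa, hd1sa]
      rw [← mul_assoc, ← hFc d1, mul_assoc, ← hFc d1]
      simp only [mul_assoc]
    rw [IsSelfAdjoint, hm₁def, star_add, star_one, h9]
  have hm₁n : ‖m₁ - 1‖ ≤ 1/2 := by
    rw [hm₁def, add_sub_cancel_left]
    calc ‖F * (F * d1)‖ ≤ 1 * ε := hmul _ _ _ _ hFn hC₁ zero_le_one
      _ ≤ 1/2 := by rw [one_mul]; exact hε12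
  obtain ⟨r₁, hr₁sa, hr₁n, hr₁1, _⟩ := exists_invsqrt m₁ hm₁sa hm₁n
  set s' := F * s₀ * r₁ with hs'def
  have ISO1 : star s' * s' = 1 - (1 - F*F)*(r₁*r₁) :=
    iso_step F s₀ r₁ m₁ hFc hFsa (by rw [hm₁def, hd1def]) hr₁sa hr₁1
  set m₂ := 1 + F * (F * d2) with hm₂def
  have hm₂sa : IsSelfAdjoint m₂ := by
    have h9 : star (F * (F * d2)) = F * (F * d2) := by
      simp only [star_mul, hFsa, hd2sa]
      rw [← mul_assoc, ← hFc d2, mul_assoc, ← hFc d2]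
      simp only [mul_assoc]
    rw [IsSelfAdjoint, hm₂def, star_add, star_one, h9]
  have hm₂n : ‖m₂ - 1‖ ≤ 1/2 := by
    rw [hm₂def, add_sub_cancel_left]
    calc ‖F * (F * d2)‖ ≤ 1 * ε := hmul _ _ _ _ hFn hC₂ zero_le_one
      _ ≤ 1/2 := by rw [one_mul]; exact hε12
  obtain ⟨r₂, hr₂sa, hr₂n, hr₂1, _⟩ := exists_invsqrt m₂ hm₂sa hm₂n
  set t' := F * t₀ * r₂ with ht'def
  have ISO2 : star t' * t' = 1 - (1 - F*F)*(r₂*r₂) :=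
    iso_step F t₀ r₂ m₂ hFc hFsa (by rw [hm₂def, hd2def]) hr₂sa hr₂1
  have hs'n : ‖s'‖ ≤ 2*M := by
    rw [hs'def]
    calc ‖F * s₀ * r₁‖ ≤ (1*M) * 2 :=
          hmul _ _ _ _ (hmul _ _ _ _ hFn hs0M zero_le_one) hr₁n (by positivity)
      _ = 2*M := by ring
  have ht'n : ‖t'‖ ≤ 2*M := by
    rw [ht'def]
    calc ‖F * t₀ * r₂‖ ≤ (1*M) * 2 :=
          hmul _ _ _ _ (hmul _ _ _ _ hFn ht0M zero_le_one) hr₂n (by positivity)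
      _ = 2*M := by ring
  -- second cutoff g with plateau W
  obtain ⟨W, hWo, hxW, hWclo⟩ :=
    normal_exists_closure_subset (isClosed_singleton (x := x)) hUfo
      (Set.singleton_subset_iff.mpr hxUf)
  rw [Set.singleton_subset_iff] at hxW
  obtain ⟨g, hg0eq, hg1eq, hgicc⟩ :=
    exists_continuous_zero_one_of_isClosed (isClosed_compl_iff.mpr hUfo)
      isClosed_closure (by rw [Set.disjoint_compl_left_iff_subset]; exact hWclo)
  have hgf : g * f = g := by
    ext y
    by_cases hy : y ∈ Uf
    · simp [ContinuousMap.mul_apply, hfpl y hy]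
    · have : g y = 0 := hg0eq hy
      simp [ContinuousMap.mul_apply, this]
  set G := Θ (cx g) with hGdef
  have hGc : ∀ b : A, G * b = b * G := fun b => hcent _ b
  have hGsa : star G = G := by rw [hGdef, ← map_star, star_cx]
  have hGn : ‖G‖ ≤ 1 :=
    norm_theta_cx_le_one Θ (fun y => (hgicc y).1) (fun y => (hgicc y).2)
  have hGF : G * F = G := by rw [hGdef, hFdef, ← map_mul, ← cx_mul, hgf]
  have habsorb : ∀ w : A, G * (G * (F * (F * w))) = G * (G * w) := by
    intro w
    rw [show G * (F * (F * w)) = (G * F) * (F * w) from (mul_assoc _ _ _).symm, hGF,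
        show G * (F * w) = (G * F) * w from (mul_assoc _ _ _).symm, hGF]
  have hGd : ∀ d : A, ‖F * d‖ ≤ ε → ‖G * (G * d)‖ ≤ ε := by
    intro d hd
    have e : G * (G * d) = (G*F) * ((G*F) * d) := by conv_lhs => rw [← hGF]
    rw [e, show (G*F)*((G*F)*d) = (G*F)*(G*(F*d)) by simp only [mul_assoc]]
    calc ‖(G*F)*(G*(F*d))‖ ≤ 1 * (1 * ε) := by
          refine hmul _ _ _ _ ?_ (hmul _ _ _ _ hGn hd zero_le_one) zero_le_one
          calc ‖G*F‖ ≤ 1*1 := hmul _ _ _ _ hGn hFn zero_le_one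
            _ = 1 := by norm_num
      _ = ε := by ring
  have hGd1 : ‖G * (G * d1)‖ ≤ ε := hGd d1 hC₁
  have hGd2 : ‖G * (G * d2)‖ ≤ ε := hGd d2 hC₂
  have hGd3 : ‖G * (G * d3)‖ ≤ ε := hGd d3 hC₃
  -- base bound on the "inner product" of s₀ and t₀
  have hE0 : star s₀ * t₀ = star s₀ * (d3 * t₀)
      - (star s₀ * s₀) * ((star s₀ * t₀) * d2) - d1 * (star s₀ * t₀) := by
    rw [hd1def, hd2def, hd3def]; noncomm_ring
  have hbase : ‖G * (G * (star s₀ * t₀))‖ ≤ 3*(M^4)*ε := by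
    have esplit : G * (G * (star s₀ * t₀)) =
        G * (G * (star s₀ * (d3 * t₀)))
        - G * (G * ((star s₀ * s₀) * ((star s₀ * t₀) * d2)))
        - G * (G * (d1 * (star s₀ * t₀))) := by
      conv_lhs => rw [hE0]
      noncomm_ring
    have e1 : G * (G * (star s₀ * (d3 * t₀))) = star s₀ * ((G * (G * d3)) * t₀) := by
      rw [mv2 hGc (star s₀) (d3 * t₀)]
      simp only [mul_assoc]
    have e2 : G * (G * ((star s₀ * s₀) * ((star s₀ * t₀) * d2)))
        = (star s₀ * s₀) * ((star s₀ * t₀) * (G * (G * d2))) := by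
      rw [mv2 hGc (star s₀ * s₀), mv2 hGc (star s₀ * t₀)]
    have e3 : G * (G * (d1 * (star s₀ * t₀))) = (G * (G * d1)) * (star s₀ * t₀) := by
      simp only [mul_assoc]
    rw [esplit, e1, e2, e3]
    have b3 : ‖star s₀ * ((G * (G * d3)) * t₀)‖ ≤ M * (ε * M) :=
      hmul _ _ _ _ (by rwa [norm_star]) (hmul _ _ _ _ hGd3 ht0M hε.le) hM0.le
    have b2 : ‖(star s₀ * s₀) * ((star s₀ * t₀) * (G * (G * d2)))‖
        ≤ (M*M) * ((M*M) * ε) := by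
      refine hmul _ _ _ _ ?_ ?_ (by positivity)
      · exact hmul _ _ _ _ (by rwa [norm_star]) hs0M hM0.le
      · exact hmul _ _ _ _ (hmul _ _ _ _ (by rwa [norm_star]) ht0M hM0.le) hGd2 (by positivity)
    have b1 : ‖(G * (G * d1)) * (star s₀ * t₀)‖ ≤ ε * (M*M) :=
      hmul _ _ _ _ hGd1 (hmul _ _ _ _ (by rwa [norm_star]) ht0M hM0.le) hε.le
    calc ‖star s₀ * ((G*(G*d3))*t₀) - (star s₀*s₀)*((star s₀*t₀)*(G*(G*d2)))
            - (G*(G*d1))*(star s₀*t₀)‖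
        ≤ ‖star s₀ * ((G*(G*d3))*t₀) - (star s₀*s₀)*((star s₀*t₀)*(G*(G*d2)))‖
          + ‖(G*(G*d1))*(star s₀*t₀)‖ := norm_sub_le _ _
      _ ≤ ‖star s₀ * ((G*(G*d3))*t₀)‖ + ‖(star s₀*s₀)*((star s₀*t₀)*(G*(G*d2)))‖
          + ‖(G*(G*d1))*(star s₀*t₀)‖ := by
            have := norm_sub_le (star s₀ * ((G*(G*d3))*t₀))
              ((star s₀*s₀)*((star s₀*t₀)*(G*(G*d2))))
            linarith
      _ ≤ M * (ε * M) + (M*M) * ((M*M) * ε) + ε * (M*M) := by linarith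
      _ ≤ 3*(M^4)*ε := by
          have h2 : (1:ℝ) ≤ M*M := by nlinarith
          have h4 : M*M ≤ M^4 := by nlinarith
          have hε0 : (0:ℝ) ≤ ε := hε.le
          nlinarith [mul_nonneg hε0 (sub_nonneg.mpr h4)]
  -- bound on Θ(g²)·(star s' * t')
  have hs'star : star s' = r₁ * (star s₀ * F) := by
    rw [hs'def]; simp only [star_mul, hr₁sa.star_eq, hFsa, mul_assoc]
  have hq : star s' * t' = r₁ * (F * (F * ((star s₀ * t₀) * r₂))) := by
    rw [hs'star, ht'def]
    calc (r₁ * (star s₀ * F)) * (F * t₀ * r₂)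
        = r₁ * (star s₀ * (F * (F * (t₀ * r₂)))) := by simp only [mul_assoc]
      _ = r₁ * (F * (star s₀ * (F * (t₀ * r₂)))) := by
          rw [central_swap hFc (star s₀) (F * (t₀ * r₂))]
      _ = r₁ * (F * (F * (star s₀ * (t₀ * r₂)))) := by
          rw [central_swap hFc (star s₀) (t₀ * r₂)]
      _ = r₁ * (F * (F * ((star s₀ * t₀) * r₂))) := by simp only [mul_assoc]
  have hη : ‖G * (G * (star s' * t'))‖ ≤ 12*(M^4)*ε := by
    have e : G * (G * (star s' * t')) = r₁ * ((G * (G * (star s₀ * t₀))) * r₂) := by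
      rw [hq, mv2 hGc r₁, habsorb]
      simp only [mul_assoc]
    rw [e]
    calc ‖r₁ * ((G * (G * (star s₀ * t₀))) * r₂)‖ ≤ 2 * ((3*(M^4)*ε) * 2) :=
          hmul _ _ _ _ hr₁n (hmul _ _ _ _ hbase hr₂n (by positivity)) (by norm_num)
      _ = 12*(M^4)*ε := by ring
  -- the corrected t
  set t'' := t' - s' * (star s' * t') with ht''def
  have hdec : star t'' * t'' - 1 = (star t' * t' - 1)
      - (star t' * s') * (star s' * t') - (star t' * s') * (star s' * t')
      + (star t' * s') * ((star s' * s') * (star s' * t')) := by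
    rw [ht''def]
    simp only [star_sub, star_mul, star_star]
    noncomm_ring
  set m₃ := 1 + G * (G * (star t'' * t'' - 1)) with hm₃def
  have ht''sa : star (star t'' * t'' - 1) = star t'' * t'' - 1 := by
    simp only [star_sub, star_mul, star_star, star_one]
  have hm₃sa : IsSelfAdjoint m₃ := by
    have h9 : star (G * (G * (star t'' * t'' - 1))) = G * (G * (star t'' * t'' - 1)) := by
      simp only [star_mul, hGsa, ht''sa]
      rw [← mul_assoc, ← hGc (star t'' * t'' - 1), mul_assoc, ← hGc (star t'' * t'' - 1)]
      simp only [mul_assoc]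
    rw [IsSelfAdjoint, hm₃def, star_add, star_one, h9]
  have hGannF : G * (G * ((1:A) - F*F)) = 0 := by
    have hfun : g * (g * ((1:C(X,ℝ)) - f*f)) = 0 := by
      linear_combination (-(g*((1:C(X,ℝ))+f))) * hgf
    have h1 : (1:A) - F*F = Θ (cx ((1:C(X,ℝ)) - f*f)) := by
      rw [cx_sub, cx_mul, map_sub, map_mul, cx_one, map_one, hFdef]
    rw [h1, hGdef, ← map_mul, ← map_mul, ← cx_mul, ← cx_mul, hfun, cx_zero, map_zero]
  have z1 : G * (G * (star t' * t' - 1)) = 0 := by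
    have h5 : star t' * t' - 1 = -(((1:A) - F*F) * (r₂*r₂)) := by rw [ISO2]; noncomm_ring
    rw [h5]
    have : G * (G * (((1:A) - F*F) * (r₂*r₂))) = (G * (G * ((1:A) - F*F))) * (r₂*r₂) := by
      simp only [mul_assoc]
    simp only [mul_neg]
    rw [this, hGannF, zero_mul, neg_zero]
  have hm₃n : ‖m₃ - 1‖ ≤ 1/2 := by
    rw [hm₃def, add_sub_cancel_left]
    have esplit : G * (G * (star t'' * t'' - 1)) =
        G * (G * (star t' * t' - 1))
        - G * (G * ((star t' * s') * (star s' * t')))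
        - G * (G * ((star t' * s') * (star s' * t')))
        + G * (G * ((star t' * s') * ((star s' * s') * (star s' * t')))) := by
      conv_lhs => rw [hdec]
      noncomm_ring
    have w2 : G * (G * ((star t' * s') * (star s' * t')))
        = (star t' * s') * (G * (G * (star s' * t'))) := mv2 hGc _ _
    have w4 : G * (G * ((star t' * s') * ((star s' * s') * (star s' * t'))))
        = (star t' * s') * ((star s' * s') * (G * (G * (star s' * t')))) := by
      rw [mv2 hGc (star t' * s'), mv2 hGc (star s' * s')]
    rw [esplit, z1, w2, w4]
    have hts : ‖star t' * s'‖ ≤ (2*M)*(2*M) :=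
      hmul _ _ _ _ (by rwa [norm_star]) hs'n (by positivity)
    have hss : ‖star s' * s'‖ ≤ (2*M)*(2*M) :=
      hmul _ _ _ _ (by rwa [norm_star]) hs'n (by positivity)
    have bX : ‖(star t' * s') * (G * (G * (star s' * t')))‖
        ≤ ((2*M)*(2*M)) * (12*(M^4)*ε) :=
      hmul _ _ _ _ hts hη (by positivity)
    have bY : ‖(star t' * s') * ((star s' * s') * (G * (G * (star s' * t'))))‖
        ≤ ((2*M)*(2*M)) * (((2*M)*(2*M)) * (12*(M^4)*ε)) :=
      hmul _ _ _ _ hts (hmul _ _ _ _ hss hη (by positivity)) (by positivity)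
    calc ‖(0:A) - (star t' * s') * (G * (G * (star s' * t')))
            - (star t' * s') * (G * (G * (star s' * t')))
            + (star t' * s') * ((star s' * s') * (G * (G * (star s' * t'))))‖
        ≤ ‖(0:A) - (star t' * s') * (G * (G * (star s' * t')))
            - (star t' * s') * (G * (G * (star s' * t')))‖
          + ‖(star t' * s') * ((star s' * s') * (G * (G * (star s' * t'))))‖ :=
          norm_add_le _ _
      _ ≤ ‖(0:A) - (star t' * s') * (G * (G * (star s' * t')))‖
          + ‖(star t' * s') * (G * (G * (star s' * t')))‖
          + ‖(star t' * s') * ((star s' * s') * (G * (G * (star s' * t'))))‖ := by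
          have := norm_sub_le ((0:A) - (star t' * s') * (G * (G * (star s' * t'))))
            ((star t' * s') * (G * (G * (star s' * t'))))
          linarith
      _ ≤ ‖(star t' * s') * (G * (G * (star s' * t')))‖
          + ‖(star t' * s') * (G * (G * (star s' * t')))‖
          + ‖(star t' * s') * ((star s' * s') * (G * (G * (star s' * t'))))‖ := by
          rw [zero_sub, norm_neg]
      _ ≤ ((2*M)*(2*M)) * (12*(M^4)*ε) + ((2*M)*(2*M)) * (12*(M^4)*ε)
          + ((2*M)*(2*M)) * (((2*M)*(2*M)) * (12*(M^4)*ε)) := by linarith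
      _ ≤ 288 * M^8 * ε := by
          have hε0 : (0:ℝ) ≤ ε := hε.le
          have h6 : (0:ℝ) ≤ M^6 := by positivity
          have h21 : (1:ℝ) ≤ M*M := by nlinarith
          have h68 : M^6 ≤ M^8 := by nlinarith [mul_le_mul_of_nonneg_left h21 h6]
          nlinarith [mul_nonneg hε0 (sub_nonneg.mpr h68)]
      _ ≤ 1/2 := hεle
  obtain ⟨r₃, hr₃sa, hr₃n, hr₃1, _⟩ := exists_invsqrt m₃ hm₃sa hm₃n
  set T := G * t'' * r₃ with hTdef
  have ISO3 : star T * T = 1 - (1 - G*G)*(r₃*r₃) :=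
    iso_step G t'' r₃ m₃ hGc hGsa (by rw [hm₃def]) hr₃sa hr₃1
  -- conclusion
  refine ⟨W, hWo, hxW, s', T, ?_⟩
  intro γ hγ
  have hγg : γ * g = γ := by
    ext y
    by_cases hy : y ∈ W
    · have : g y = 1 := hg1eq (subset_closure hy)
      simp [ContinuousMap.mul_apply, this]
    · simp [ContinuousMap.mul_apply, hγ y hy]
  have hγf : γ * f = γ := by
    calc γ * f = (γ * g) * f := by rw [hγg]
      _ = γ * (g * f) := mul_assoc _ _ _
      _ = γ * g := by rw [hgf]
      _ = γ := hγg
  set Γ := Θ (cx γ) with hΓdef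
  have hΓG : Γ * G = Γ := by rw [hΓdef, hGdef, ← map_mul, ← cx_mul, hγg]
  have hΓannF : Γ * ((1:A) - F*F) = 0 := by
    have hfun : γ * ((1:C(X,ℝ)) - f*f) = 0 := by
      linear_combination (-((1:C(X,ℝ))+f)) * hγf
    have h1 : (1:A) - F*F = Θ (cx ((1:C(X,ℝ)) - f*f)) := by
      rw [cx_sub, cx_mul, map_sub, map_mul, cx_one, map_one, hFdef]
    rw [h1, hΓdef, ← map_mul, ← cx_mul, hfun, cx_zero, map_zero]
  have hΓannG : Γ * ((1:A) - G*G) = 0 := by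
    have hfun : γ * ((1:C(X,ℝ)) - g*g) = 0 := by
      linear_combination (-((1:C(X,ℝ))+g)) * hγg
    have h1 : (1:A) - G*G = Θ (cx ((1:C(X,ℝ)) - g*g)) := by
      rw [cx_sub, cx_mul, map_sub, map_mul, cx_one, map_one, hGdef]
    rw [h1, hΓdef, ← map_mul, ← cx_mul, hfun, cx_zero, map_zero]
  refine ⟨?_, ?_, ?_⟩
  · rw [ISO1, mul_sub, mul_one, ← mul_assoc, hΓannF, zero_mul, sub_zero]
  · rw [ISO3, mul_sub, mul_one, ← mul_assoc, hΓannG, zero_mul, sub_zero]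
  · have h5 : (1:A) - star s' * s' = ((1:A) - F*F)*(r₁*r₁) := by
      rw [ISO1]; noncomm_ring
    have horth : star s' * t'' = (((1:A) - F*F)*(r₁*r₁)) * (star s' * t') := by
      rw [ht''def]
      calc star s' * (t' - s' * (star s' * t'))
          = ((1:A) - star s' * s') * (star s' * t') := by noncomm_ring
        _ = (((1:A) - F*F)*(r₁*r₁)) * (star s' * t') := by rw [h5]
    calc Γ * (star s' * T) = Γ * (star s' * (G * (t'' * r₃))) := by
          rw [hTdef]; simp only [mul_assoc]
      _ = Γ * (G * (star s' * (t'' * r₃))) := by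
          rw [central_swap hGc (star s') (t'' * r₃)]
      _ = (Γ * G) * (star s' * (t'' * r₃)) := (mul_assoc _ _ _).symm
      _ = Γ * ((star s' * t'') * r₃) := by rw [hΓG]; simp only [mul_assoc]
      _ = ((Γ * ((1:A) - F*F)) * (r₁*r₁)) * ((star s' * t') * r₃) := by
          rw [horth]; simp only [mul_assoc]
      _ = 0 := by rw [hΓannF, zero_mul, zero_mul]

end Local



section Main

variable {X : Type*} [TopologicalSpace X] [CompactSpace X] [T2Space X]
variable {A : Type*} [CStarAlgebra A]

lemma cx_sum {ι : Type*} (s : Finset ι) (f : ι → C(X, ℝ)) :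
    cx (∑ i ∈ s, f i) = ∑ i ∈ s, cx (f i) := by
  ext y
  simp [ContinuousMap.sum_apply]

lemma central_pair {R : Type*} [Ring R] [StarRing R] {c : R}
    (hc : ∀ b : R, c * b = b * c) (hcsa : star c = c) (u v : R) :
    star (c * u) * (c * v) = (c * c) * (star u * v) := by
  rw [star_mul, hcsa]
  calc (star u * c) * (c * v) = star u * (c * (c * v)) := by simp only [mul_assoc]
    _ = c * (star u * (c * v)) := by rw [central_swap hc (star u)]
    _ = c * (c * (star u * v)) := by rw [central_swap hc (star u)]
    _ = (c * c) * (star u * v) := (mul_assoc _ _ _).symm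

theorem stmt9' (Θ : C(X, ℂ) →⋆ₐ[ℂ] A)
    (hcent : ∀ (f : C(X, ℂ)) (a : A), Θ f * a = a * Θ f)
    (hfibres : ∀ x : X, QuotProperlyInfinite (fibreIdeal Θ {x})) :
    ∃ n : ℕ, IsProperlyInfinite (1 : Matrix (Fin (n + 1)) (Fin (n + 1)) A) := by
  obtain hX | hX := isEmpty_or_nonempty X
  · -- X empty: A is the zero ring
    have h10 : (1 : A) = 0 := by
      have h : (1 : C(X, ℂ)) = 0 := by ext y; exact hX.elim y
      calc (1:A) = Θ 1 := (map_one Θ).symm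
        _ = Θ 0 := by rw [h]
        _ = 0 := map_zero Θ
    have h1M : (1 : Matrix (Fin 1) (Fin 1) A) = 0 := by
      ext i j
      simp [Matrix.one_apply, h10]
    exact ⟨0, 0, 0, by simp [h1M], by simp [h1M], by simp, by simp, by simp⟩
  · choose U hUo hxU SS TT hrel using fun x : X => local_data Θ hcent x (hfibres x)
    obtain ⟨t, ht⟩ := IsCompact.elim_finite_subcover isCompact_univ U hUo
      (fun y _ => Set.mem_iUnion.mpr ⟨y, hxU y⟩)
    have htne : t.Nonempty := by
      obtain ⟨z, hz, _⟩ : ∃ z ∈ t, hX.some ∈ U z := by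
        simpa using ht (Set.mem_univ hX.some)
      exact ⟨z, hz⟩
    obtain ⟨n, hn⟩ : ∃ n, t.card = n + 1 :=
      ⟨t.card - 1, (Nat.succ_pred_eq_of_pos (Finset.card_pos.mpr htne)).symm⟩
    set e : Fin (n+1) ≃ {x // x ∈ t} := (Fintype.equivFinOfCardEq (by
      rw [Fintype.card_coe, hn])).symm with hedef
    set pt : Fin (n+1) → X := fun i => (e i : X) with hptdef
    have hcover : Set.univ ⊆ ⋃ i, U (pt i) := by
      intro y _
      obtain ⟨z, hz, hyz⟩ : ∃ z ∈ t, y ∈ U z := by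
        simpa using ht (Set.mem_univ y)
      refine Set.mem_iUnion.mpr ⟨e.symm ⟨z, hz⟩, ?_⟩
      simpa [hptdef] using hyz
    obtain ⟨ρ, hρsub⟩ := PartitionOfUnity.exists_isSubordinate isClosed_univ
      (fun i => U (pt i)) (fun i => hUo (pt i)) hcover
    -- square roots of the partition functions
    set σ : Fin (n+1) → C(X, ℝ) := fun i =>
      ⟨fun y => Real.sqrt (ρ i y), Real.continuous_sqrt.comp (ρ i).continuous⟩ with hσdef
    have hσσ : ∀ i, σ i * σ i = (ρ i : C(X, ℝ)) := by
      intro i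
      ext y
      simp only [ContinuousMap.mul_apply, hσdef, ContinuousMap.coe_mk]
      exact Real.mul_self_sqrt (ρ.nonneg i y)
    -- relations for each piece
    have hsupp : ∀ i, ∀ y, y ∉ U (pt i) → (ρ i) y = 0 := by
      intro i y hy
      exact image_eq_zero_of_notMem_tsupport fun hmem => hy (hρsub i hmem)
    have hR := fun i => hrel (pt i) (ρ i) (hsupp i)
    have hcen : ∀ (h : C(X, ℝ)) (b : A), Θ (cx h) * b = b * Θ (cx h) :=
      fun h b => hcent _ b
    have hsa : ∀ h : C(X, ℝ), star (Θ (cx h)) = Θ (cx h) :=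
      fun h => by rw [← map_star, star_cx]
    have powkey : ∀ (i : Fin (n+1)) (a b : ℕ),
        Θ (cx (ρ i)) * (star (SS (pt i)) * ((star (TT (pt i)))^a * ((TT (pt i))^b * SS (pt i))))
          = if a = b then Θ (cx (ρ i)) else 0 :=
      fun i => pow_rel _ _ _ (hcen (ρ i)) (hsa (ρ i)) (hR i).1 (hR i).2.1 (hR i).2.2
    -- entries
    set Ent : Fin (n+1) → ℕ → A :=
      fun i a => Θ (cx (σ i)) * ((TT (pt i))^a * SS (pt i)) with hEntdef
    have hentry : ∀ (i : Fin (n+1)) (a b : ℕ),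
        star (Ent i a) * (Ent i b) = if a = b then Θ (cx (ρ i)) else 0 := by
      intro i a b
      rw [hEntdef]
      rw [central_pair (hcen (σ i)) (hsa (σ i))]
      rw [show Θ (cx (σ i)) * Θ (cx (σ i)) = Θ (cx (ρ i)) by
        rw [← map_mul, ← cx_mul, hσσ]]
      rw [show star ((TT (pt i))^a * SS (pt i)) * ((TT (pt i))^b * SS (pt i))
          = star (SS (pt i)) * ((star (TT (pt i)))^a * ((TT (pt i))^b * SS (pt i))) by
        simp only [star_mul, star_pow]; simp only [mul_assoc]]
      exact powkey i a b
    have hsum1 : ∑ i, Θ (cx (ρ i)) = 1 := by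
      rw [← map_sum, ← cx_sum]
      rw [show ∑ i ∈ Finset.univ, (ρ i : C(X,ℝ)) = 1 by
        ext y
        rw [ContinuousMap.sum_apply]
        have := ρ.sum_eq_one (Set.mem_univ y)
        rw [finsum_eq_sum_of_fintype] at this
        simpa using this]
      rw [cx_one, map_one]
    set V : Matrix (Fin (n+1)) (Fin (n+1)) A :=
      Matrix.of fun i m => Ent i ((m : ℕ) + 1) with hVdef
    set W : Matrix (Fin (n+1)) (Fin (n+1)) A :=
      Matrix.of fun i m => Ent i ((n+1) + (m : ℕ) + 1) with hWdef
    have hVV : star V * V = 1 := by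
      ext m m'
      rw [Matrix.mul_apply, Matrix.one_apply]
      have hterms : ∀ i, (star V) m i * V i m'
          = if ((m:ℕ)+1 = (m':ℕ)+1) then Θ (cx (ρ i)) else 0 := by
        intro i
        rw [Matrix.star_apply]
        exact hentry i _ _
      rw [Finset.sum_congr rfl fun i _ => hterms i]
      by_cases hmm' : m = m'
      · subst hmm'
        simp only [if_pos rfl]
        exact hsum1
      · have hne : ¬((m:ℕ)+1 = (m':ℕ)+1) := fun h => hmm' (Fin.ext (by omega))
        simp [hne, hmm', Fin.val_inj]
    have hWW : star W * W = 1 := by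
      ext m m'
      rw [Matrix.mul_apply, Matrix.one_apply]
      have hterms : ∀ i, (star W) m i * W i m'
          = if ((n+1)+(m:ℕ)+1 = (n+1)+(m':ℕ)+1) then Θ (cx (ρ i)) else 0 := by
        intro i
        rw [Matrix.star_apply]
        exact hentry i _ _
      rw [Finset.sum_congr rfl fun i _ => hterms i]
      by_cases hmm' : m = m'
      · subst hmm'
        simp only [if_pos rfl]
        exact hsum1
      · have hne : ¬((n+1)+(m:ℕ)+1 = (n+1)+(m':ℕ)+1) := fun h => hmm' (Fin.ext (by omega))
        simp [hne, hmm', Fin.val_inj]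
    have hVW : star V * W = 0 := by
      ext m m'
      rw [Matrix.mul_apply, Matrix.zero_apply]
      have hterms : ∀ i, (star V) m i * W i m' = (0 : A) := by
        intro i
        rw [Matrix.star_apply]
        have := hentry i ((m:ℕ)+1) ((n+1)+(m':ℕ)+1)
        rw [if_neg (by omega)] at this
        exact this
      rw [Finset.sum_congr rfl fun i _ => hterms i]
      simp
    refine ⟨n, V, W, hVV, hWW, by rw [one_mul], by rw [one_mul], ?_⟩
    calc (V * star V) * (W * star W) = V * ((star V * W) * star W) := by
          simp only [mul_assoc]
      _ = 0 := by rw [hVW, zero_mul, mul_zero]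

end Main

end Stmt9Aux

/-- a unital `C(X)`-algebra over a compact Hausdorff space all of whose fibres are
properly infinite has some matrix algebra `Mₙ(A)` properly infinite. -/
theorem stmt9 {X : Type*} [TopologicalSpace X] [CompactSpace X] [T2Space X]
    {A : Type*} [CStarAlgebra A]
    (Θ : C(X, ℂ) →⋆ₐ[ℂ] A) (hcent : ∀ (f : C(X, ℂ)) (a : A), Θ f * a = a * Θ f)
    (hfibres : ∀ x : X, QuotProperlyInfinite (fibreIdeal Θ {x})) :
    ∃ n : ℕ, IsProperlyInfinite (1 : Matrix (Fin (n + 1)) (Fin (n + 1)) A) :=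
  Stmt9Aux.stmt9' Θ hcent hfibres
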